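/- For all natural numbers ℓ and ℓ', the product of Legendre polynomials P_ℓ·P_{ℓ'} lies in the span of the Legendre polynomials P_L with |ℓ − ℓ'| ≤ L ≤ ℓ + ℓ'; moreover the coefficients Γ(L; ℓ, ℓ') := (2L+1)/2 · ∫_{−1}^{1} P_L(t) P_ℓ(t) P_{ℓ'}(t) dt satisfy ∑_{L=0}^{ℓ+ℓ'} Γ(L; ℓ, ℓ') = 1. -/

import Mathlib

open Polynomial intervalIntegral

/-- The `ℓ`-th Legendre polynomial via the Rodrigues formula. -/
noncomputable def legendre (n : ℕ) : Polynomial ℝ :=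
  C (1 / ((2 : ℝ) ^ n * n.factorial)) * derivative^[n] ((X ^ 2 - 1) ^ n)

/-- The Legendre linearization coefficients `Γ(L; ℓ, ℓ')`. -/
noncomputable def Γ (L ℓ ℓ' : ℕ) : ℝ :=
  (2 * L + 1 : ℝ) / 2 *
    ∫ t in (-1 : ℝ)..1, (legendre L).eval t * (legendre ℓ).eval t * (legendre ℓ').eval t

noncomputable def W (n : ℕ) : Polynomial ℝ := ((X : ℝ[X]) ^ 2 - 1) ^ n

lemma monic_W (n : ℕ) : (W n).Monic := by
  apply Polynomial.Monic.pow
  simpa using Polynomial.monic_X_pow_sub_C (1 : ℝ) (n := 2) (by norm_num)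

lemma natDegree_W (n : ℕ) : (W n).natDegree = 2 * n := by
  have h : ((X : ℝ[X]) ^ 2 - 1).natDegree = 2 := by
    simpa using Polynomial.natDegree_X_pow_sub_C (n := 2) (r := (1:ℝ))
  rw [W, Polynomial.natDegree_pow, h, mul_comm]

lemma W_ne_zero (n : ℕ) : W n ≠ 0 := (monic_W n).ne_zero

lemma isRoot_iter_W {n k : ℕ} (hk : k < n) (a : ℝ) (ha : a = 1 ∨ a = -1) :
    (derivative^[k] (W n)).IsRoot a := by
  apply Polynomial.isRoot_iterate_derivative_of_lt_rootMultiplicity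
  apply lt_of_lt_of_le hk
  rw [Polynomial.le_rootMultiplicity_iff (W_ne_zero n)]
  have h2 : W n = ((X : ℝ[X]) - C a) ^ n * ((X : ℝ[X]) + C a) ^ n := by
    rw [W, ← mul_pow]
    rcases ha with h | h <;> subst h <;> ring_nf <;> simp [map_neg, map_one] <;> ring_nf
  rw [h2]; exact Dvd.intro _ rfl

lemma poly_intble (p : ℝ[X]) (a b : ℝ) :
    IntervalIntegrable (fun t => p.eval t) MeasureTheory.volume a b :=
  p.continuous.intervalIntegrable a b

lemma integral_derivative (p : ℝ[X]) :
    ∫ t in (-1:ℝ)..1, (derivative p).eval t = p.eval 1 - p.eval (-1) := by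
  exact intervalIntegral.integral_eq_sub_of_hasDerivAt
    (f := fun x => p.eval x) (f' := fun x => (derivative p).eval x)
    (fun x _ => p.hasDerivAt x) (poly_intble _ _ _)

lemma ibp (p q : ℝ[X]) :
    ∫ t in (-1:ℝ)..1, (derivative p).eval t * q.eval t =
      (p.eval 1 * q.eval 1 - p.eval (-1) * q.eval (-1)) -
        ∫ t in (-1:ℝ)..1, p.eval t * (derivative q).eval t := by
  have h := integral_derivative (p * q)
  rw [Polynomial.derivative_mul] at h
  have h2 : ∫ t in (-1:ℝ)..1, ((derivative p * q).eval t + (p * derivative q).eval t)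
      = (∫ t in (-1:ℝ)..1, (derivative p * q).eval t)
        + ∫ t in (-1:ℝ)..1, (p * derivative q).eval t :=
    intervalIntegral.integral_add (poly_intble _ _ _) (poly_intble _ _ _)
  simp only [Polynomial.eval_add, Polynomial.eval_mul] at h h2
  rw [h2] at h
  linarith

lemma iter_shift (n : ℕ) (q : ℝ[X]) :
    ∀ j, j ≤ n →
      ∫ t in (-1:ℝ)..1, (derivative^[n] (W n)).eval t * q.eval t =
        (-1 : ℝ) ^ j *
          ∫ t in (-1:ℝ)..1, (derivative^[n - j] (W n)).eval t * (derivative^[j] q).eval t := by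
  intro j
  induction j with
  | zero => simp
  | succ j ih =>
    intro hj
    rw [ih (Nat.le_of_succ_le hj)]
    have hnj : n - j = (n - (j+1)) + 1 := by omega
    have hroot1 : (derivative^[n - (j+1)] (W n)).eval 1 = 0 :=
      isRoot_iter_W (by omega) 1 (Or.inl rfl)
    have hroot2 : (derivative^[n - (j+1)] (W n)).eval (-1) = 0 :=
      isRoot_iter_W (by omega) (-1) (Or.inr rfl)
    rw [hnj, Function.iterate_succ_apply',
      ibp (derivative^[n - (j+1)] (W n)) (derivative^[j] q), hroot1, hroot2,
      ← Function.iterate_succ_apply' derivative j q]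
    ring

lemma iterate_derivative_eq_zero_of_lt {q : ℝ[X]} {n : ℕ} (h : q.natDegree < n) :
    derivative^[n] q = 0 :=
  Polynomial.iterate_derivative_eq_zero h

lemma orth_W_low (n : ℕ) (q : ℝ[X]) (h : q.natDegree < n) :
    ∫ t in (-1:ℝ)..1, (derivative^[n] (W n)).eval t * q.eval t = 0 := by
  rw [iter_shift n q n le_rfl, iterate_derivative_eq_zero_of_lt h]
  simp

lemma legendre_eq (n : ℕ) :
    legendre n = C (1 / ((2 : ℝ) ^ n * n.factorial)) * derivative^[n] (W n) := rfl

lemma orth_low (n : ℕ) (q : ℝ[X]) (h : q.natDegree < n) :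
    ∫ t in (-1:ℝ)..1, (legendre n).eval t * q.eval t = 0 := by
  have := orth_W_low n q h
  simp only [legendre_eq, Polynomial.eval_mul, Polynomial.eval_C, mul_assoc]
  rw [intervalIntegral.integral_const_mul, this, mul_zero]

lemma coeff_W_top (n : ℕ) : (W n).coeff (2 * n) = 1 := by
  have := (monic_W n).coeff_natDegree
  rwa [natDegree_W] at this

lemma coeff_legendre_self (n : ℕ) :
    (legendre n).coeff n = ((2 * n).descFactorial n : ℝ) / ((2 : ℝ) ^ n * n.factorial) := by
  rw [legendre_eq, Polynomial.coeff_C_mul, Polynomial.coeff_iterate_derivative]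
  have h : n + n = 2 * n := by ring
  rw [h, coeff_W_top, nsmul_eq_mul, mul_one]
  ring

lemma coeff_legendre_self_pos (n : ℕ) : 0 < (legendre n).coeff n := by
  rw [coeff_legendre_self]
  have h1 : (0:ℝ) < ((2 * n).descFactorial n : ℝ) := by
    have h0 : (2 * n).descFactorial n ≠ 0 := by
      rw [Ne, Nat.descFactorial_eq_zero_iff_lt]; omega
    exact_mod_cast Nat.pos_of_ne_zero h0
  positivity

lemma natDegree_legendre_le (n : ℕ) : (legendre n).natDegree ≤ n := by
  rw [legendre_eq]
  refine (Polynomial.natDegree_C_mul_le _ _).trans ?_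
  refine (Polynomial.natDegree_iterate_derivative _ _).trans ?_
  rw [natDegree_W]; omega

lemma coeff_legendre_gt {n m : ℕ} (h : n < m) : (legendre n).coeff m = 0 :=
  Polynomial.coeff_eq_zero_of_natDegree_lt (lt_of_le_of_lt (natDegree_legendre_le n) h)

lemma legendre_ne_zero (n : ℕ) : legendre n ≠ 0 := fun h => by
  have := coeff_legendre_self_pos n
  rw [h] at this; simp at this

noncomputable def V (n : ℕ) : Polynomial ℝ := ((1 : ℝ[X]) - X ^ 2) ^ n

lemma V_eval (n : ℕ) (t : ℝ) : (V n).eval t = (1 - t ^ 2) ^ n := by simp [V]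

lemma W_eval (n : ℕ) (t : ℝ) : (W n).eval t = (-1 : ℝ) ^ n * (1 - t ^ 2) ^ n := by
  simp [W, ← mul_pow]

noncomputable def In (n : ℕ) : ℝ := ∫ t in (-1:ℝ)..1, (1 - t ^ 2) ^ n

lemma V_identity (n : ℕ) :
    C ((2 * n + 3 : ℕ) : ℝ) * V (n + 1) =
      derivative ((X : ℝ[X]) * V (n + 1)) + C ((2 * (n + 1) : ℕ) : ℝ) * V n := by
  rw [V, V, Polynomial.derivative_mul, Polynomial.derivative_X, Polynomial.derivative_pow]
  have hd : derivative ((1 : ℝ[X]) - X ^ 2) = -(C 2 * X) := by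
    rw [Polynomial.derivative_sub, Polynomial.derivative_one, Polynomial.derivative_X_pow]
    simp
  rw [hd]
  have h1 : ((1 : ℝ[X]) - X ^ 2) ^ (n + 1) = ((1 : ℝ[X]) - X ^ 2) ^ n * ((1:ℝ[X]) - X^2) :=
    pow_succ _ _
  simp only [Nat.add_sub_cancel, h1]
  push_cast
  simp only [map_add, map_mul, map_ofNat, map_one, Polynomial.C_eq_natCast]
  ring

lemma In_rec (n : ℕ) : ((2 * n + 3 : ℕ) : ℝ) * In (n + 1) = ((2 * (n + 1) : ℕ) : ℝ) * In n := by
  have key : (∫ t in (-1:ℝ)..1, (C ((2*n+3:ℕ):ℝ) * V (n+1)).eval t)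
      = ∫ t in (-1:ℝ)..1, (derivative ((X:ℝ[X]) * V (n+1)) + C ((2*(n+1):ℕ):ℝ) * V n).eval t := by
    rw [V_identity n]
  have hL : (∫ t in (-1:ℝ)..1, (C ((2*n+3:ℕ):ℝ) * V (n+1)).eval t) = ((2*n+3:ℕ):ℝ) * In (n+1) := by
    simp only [Polynomial.eval_mul, Polynomial.eval_C, V_eval]
    rw [intervalIntegral.integral_const_mul]; rfl
  have hR1 : (∫ t in (-1:ℝ)..1, (derivative ((X:ℝ[X]) * V (n+1))).eval t) = 0 := by
    rw [integral_derivative]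
    simp [V_eval]
  have hR : (∫ t in (-1:ℝ)..1, (derivative ((X:ℝ[X]) * V (n+1)) + C ((2*(n+1):ℕ):ℝ) * V n).eval t)
      = ((2*(n+1):ℕ):ℝ) * In n := by
    simp only [Polynomial.eval_add]
    rw [intervalIntegral.integral_add (poly_intble _ _ _) (poly_intble _ _ _), hR1, zero_add]
    simp only [Polynomial.eval_mul, Polynomial.eval_C, V_eval]
    rw [intervalIntegral.integral_const_mul]; rfl
  rw [hL, hR] at key; exact key

lemma In_eq (n : ℕ) :
    In n = 2 ^ (2 * n + 1) * (n.factorial : ℝ) ^ 2 / ((2 * n + 1).factorial : ℝ) := by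
  induction n with
  | zero => simp [In]; norm_num
  | succ n ih =>
    have hrec := In_rec n
    have h3 : ((2 * n + 3 : ℕ) : ℝ) ≠ 0 := by positivity
    have : In (n + 1) = ((2 * (n + 1) : ℕ) : ℝ) * In n / ((2 * n + 3 : ℕ) : ℝ) := by
      field_simp at hrec ⊢; linarith
    rw [this, ih]
    have hfac : (2 * (n + 1) + 1).factorial = (2 * n + 3) * ((2 * n + 2) * (2 * n + 1).factorial) := by
      have e1 : 2 * (n + 1) + 1 = (2 * n + 1) + 1 + 1 := by ring
      rw [e1, Nat.factorial_succ, Nat.factorial_succ]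
    have hfacn : ((n + 1).factorial : ℝ) = (n + 1) * n.factorial := by
      rw [Nat.factorial_succ]; push_cast; ring
    rw [hfacn]
    have h1 : ((2 * n + 1).factorial : ℝ) ≠ 0 := by
      exact_mod_cast Nat.factorial_ne_zero _
    rw [hfac]
    push_cast
    field_simp
    ring

lemma iter_legendre_const (n : ℕ) :
    derivative^[n] (legendre n) = C ((n.factorial : ℝ) * (legendre n).coeff n) := by
  have hle : (derivative^[n] (legendre n)).natDegree ≤ 0 := by
    have h1 := Polynomial.natDegree_iterate_derivative (legendre n) n
    have h2 := natDegree_legendre_le n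
    omega
  have heq := Polynomial.eq_C_of_natDegree_le_zero hle
  rw [heq, Polynomial.coeff_iterate_derivative, zero_add, Nat.descFactorial_self,
    nsmul_eq_mul]

lemma integral_W (n : ℕ) :
    ∫ t in (-1:ℝ)..1, (W n).eval t = (-1 : ℝ) ^ n * In n := by
  simp only [W_eval]
  rw [intervalIntegral.integral_const_mul]; rfl

lemma norm_legendre (n : ℕ) :
    ∫ t in (-1:ℝ)..1, (legendre n).eval t * (legendre n).eval t = 2 / (2 * (n:ℝ) + 1) := by
  have hev : ∀ t : ℝ, (legendre n).eval t
      = (1/((2:ℝ)^n * n.factorial)) * (derivative^[n] (W n)).eval t := by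
    intro t; rw [legendre_eq]; simp
  have hc : (∫ t in (-1:ℝ)..1, (legendre n).eval t * (legendre n).eval t)
      = (1 / ((2:ℝ)^n * n.factorial)) *
        ∫ t in (-1:ℝ)..1, (derivative^[n] (W n)).eval t * (legendre n).eval t := by
    rw [← intervalIntegral.integral_const_mul]
    congr 1; funext t
    nth_rewrite 1 [hev t]
    ring
  rw [hc, iter_shift n (legendre n) n le_rfl, Nat.sub_self, Function.iterate_zero_apply,
    iter_legendre_const]
  have h2 : (∫ t in (-1:ℝ)..1, (W n).eval t * (C ((n.factorial : ℝ) * (legendre n).coeff n)).eval t)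
      = ((n.factorial : ℝ) * (legendre n).coeff n) * ((-1:ℝ)^n * In n) := by
    simp only [Polynomial.eval_C]
    rw [intervalIntegral.integral_mul_const, integral_W]
    ring
  rw [h2]
  have hm1 : (-1:ℝ)^n * (-1)^n = 1 := by
    rw [← pow_add, show n + n = 2*n by ring, pow_mul]; norm_num
  have hstep : (1/((2:ℝ)^n * n.factorial)) * ((-1:ℝ)^n *
        ((n.factorial : ℝ) * (legendre n).coeff n * ((-1:ℝ)^n * In n)))
      = (1/((2:ℝ)^n * n.factorial)) * ((n.factorial : ℝ) * (legendre n).coeff n) * In n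
        * ((-1:ℝ)^n * (-1)^n) := by ring
  rw [hstep, hm1, mul_one, coeff_legendre_self, In_eq]
  have hdesc : ((2*n).descFactorial n : ℝ) * (n.factorial : ℝ) = ((2*n).factorial : ℝ) := by
    have h0 := Nat.factorial_mul_descFactorial (show n ≤ 2*n by omega)
    have h3 : 2*n - n = n := by omega
    rw [h3] at h0
    exact_mod_cast by rw [mul_comm]; exact h0
  have hfac : ((2*n+1).factorial : ℝ) = (2*(n:ℝ)+1) * ((2*n).factorial : ℝ) := by
    rw [Nat.factorial_succ]; push_cast; ring
  have hne1 : ((2:ℝ)^n) ≠ 0 := by positivity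
  have hne2 : ((n.factorial : ℝ)) ≠ 0 := by exact_mod_cast Nat.factorial_ne_zero n
  have hne4 : (2*(n:ℝ)+1) ≠ 0 := by positivity
  have hne5 : ((2*n).descFactorial n : ℝ) ≠ 0 := by
    have h0 : (2*n).descFactorial n ≠ 0 := by
      rw [Ne, Nat.descFactorial_eq_zero_iff_lt]; omega
    exact_mod_cast h0
  have hne6 : ((n*2).descFactorial n : ℝ) ≠ 0 := by rwa [mul_comm n 2]
  rw [hfac, ← hdesc]
  field_simp
  ring

lemma orth_distinct {m n : ℕ} (h : m ≠ n) :
    ∫ t in (-1:ℝ)..1, (legendre m).eval t * (legendre n).eval t = 0 := by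
  rcases h.lt_or_gt with hlt | hlt
  · have h0 := orth_low n (legendre m) (lt_of_le_of_lt (natDegree_legendre_le m) hlt)
    simpa [mul_comm] using h0
  · have h0 := orth_low m (legendre n) (lt_of_le_of_lt (natDegree_legendre_le n) hlt)
    simpa [mul_comm] using h0

lemma W_factored (n : ℕ) : W n = ((X : ℝ[X]) + 1) ^ n * ((X : ℝ[X]) - 1) ^ n := by
  rw [W, ← mul_pow]; ring_nf

lemma eval_one_iter_W (n : ℕ) :
    (derivative^[n] (W n)).eval 1 = 2 ^ n * (n.factorial : ℝ) := by
  rw [W_factored, Polynomial.iterate_derivative_mul]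
  rw [Polynomial.eval_finset_sum]
  rw [Finset.sum_eq_single n]
  · rw [Nat.choose_self, one_smul, Nat.sub_self, Function.iterate_zero_apply]
    have h1 : derivative^[n] (((X : ℝ[X]) - 1) ^ n) = (n.factorial : ℝ[X]) := by
      simpa using Polynomial.iterate_derivative_X_sub_pow_self n (1 : ℝ)
    rw [h1]
    simp only [Polynomial.eval_mul, Polynomial.eval_pow, Polynomial.eval_add,
      Polynomial.eval_X, Polynomial.eval_one, Polynomial.eval_natCast]
    norm_num
  · intro k hk hkn
    have hk1 : k < n := by
      have := Finset.mem_range.mp hk; omega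
    have hroot : (derivative^[k] (((X : ℝ[X]) - 1) ^ n)).eval 1 = 0 := by
      have hC : ((X : ℝ[X]) - 1) = X - C 1 := by simp
      rw [hC]
      apply Polynomial.isRoot_iterate_derivative_of_lt_rootMultiplicity
      apply lt_of_lt_of_le hk1
      rw [Polynomial.le_rootMultiplicity_iff (pow_ne_zero _ (Polynomial.X_sub_C_ne_zero (1:ℝ)))]
    rw [Polynomial.eval_smul, Polynomial.eval_mul, hroot, mul_zero, smul_zero]
  · intro hn
    exact absurd (Finset.self_mem_range_succ n) hn

lemma legendre_eval_one (n : ℕ) : (legendre n).eval 1 = 1 := by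
  rw [legendre_eq, Polynomial.eval_mul, Polynomial.eval_C, eval_one_iter_W]
  have h1 : ((2:ℝ)^n * n.factorial) ≠ 0 := by
    have : ((n.factorial:ℝ)) ≠ 0 := by exact_mod_cast Nat.factorial_ne_zero n
    positivity
  field_simp

lemma legendre_zero_eq : legendre 0 = 1 := by
  simp [legendre_eq, W]

lemma mem_span_legendre (N : ℕ) (p : ℝ[X]) (hp : p.natDegree ≤ N) :
    p ∈ Submodule.span ℝ (legendre '' Set.Iic N) := by
  induction N generalizing p with
  | zero =>
    have h0 : p = (p.coeff 0) • legendre 0 := by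
      rw [legendre_zero_eq, smul_eq_C_mul, mul_one]
      exact (Polynomial.eq_C_of_natDegree_le_zero hp)
    rw [h0]
    exact Submodule.smul_mem _ _ (Submodule.subset_span ⟨0, Set.mem_Iic.mpr le_rfl, rfl⟩)
  | succ N ih =>
    set a : ℝ := p.coeff (N+1) / (legendre (N+1)).coeff (N+1) with ha
    have hk : (legendre (N+1)).coeff (N+1) ≠ 0 := ne_of_gt (coeff_legendre_self_pos (N+1))
    set q : ℝ[X] := p - a • legendre (N+1) with hq
    have hqd : q.natDegree ≤ N := by
      rw [Polynomial.natDegree_le_iff_coeff_eq_zero]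
      intro m hm
      rcases eq_or_lt_of_le (Nat.succ_le_of_lt hm) with he | hlt
      · rw [hq]
        simp only [Polynomial.coeff_sub, Polynomial.coeff_smul, smul_eq_mul]
        rw [← he, ha]
        field_simp
        simp
      · rw [hq]
        simp only [Polynomial.coeff_sub, Polynomial.coeff_smul, smul_eq_mul]
        rw [Polynomial.coeff_eq_zero_of_natDegree_lt (lt_of_le_of_lt hp hlt),
          coeff_legendre_gt hlt, mul_zero, sub_zero]
    have hqmem : q ∈ Submodule.span ℝ (legendre '' Set.Iic N) := ih q hqd
    have hmono : Submodule.span ℝ (legendre '' Set.Iic N) ≤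
        Submodule.span ℝ (legendre '' Set.Iic (N+1)) :=
      Submodule.span_mono (Set.image_mono (Set.Iic_subset_Iic.mpr (Nat.le_succ N)))
    have hpd : p = q + a • legendre (N+1) := by rw [hq]; ring
    rw [hpd]
    exact Submodule.add_mem _ (hmono hqmem)
      (Submodule.smul_mem _ _ (Submodule.subset_span ⟨N+1, Set.mem_Iic.mpr le_rfl, rfl⟩))

lemma Γ_vanish {L ℓ ℓ' : ℕ} (h : L < Nat.dist ℓ ℓ') : Γ L ℓ ℓ' = 0 := by
  have hd : Nat.dist ℓ ℓ' = (ℓ - ℓ') + (ℓ' - ℓ) := rfl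
  rcases le_total ℓ' ℓ with hle | hle
  · have hL : L + ℓ' < ℓ := by omega
    have hq : (legendre L * legendre ℓ').natDegree < ℓ :=
      lt_of_le_of_lt (le_trans Polynomial.natDegree_mul_le
        (add_le_add (natDegree_legendre_le L) (natDegree_legendre_le ℓ'))) hL
    have h0 := orth_low ℓ (legendre L * legendre ℓ') hq
    unfold Γ
    have hre : (∫ t in (-1:ℝ)..1,
        (legendre L).eval t * (legendre ℓ).eval t * (legendre ℓ').eval t)
        = ∫ t in (-1:ℝ)..1, (legendre ℓ).eval t * (legendre L * legendre ℓ').eval t := by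
      congr 1; funext t; simp only [Polynomial.eval_mul]; ring
    rw [hre, h0, mul_zero]
  · have hL : L + ℓ < ℓ' := by omega
    have hq : (legendre L * legendre ℓ).natDegree < ℓ' :=
      lt_of_le_of_lt (le_trans Polynomial.natDegree_mul_le
        (add_le_add (natDegree_legendre_le L) (natDegree_legendre_le ℓ))) hL
    have h0 := orth_low ℓ' (legendre L * legendre ℓ) hq
    unfold Γ
    have hre : (∫ t in (-1:ℝ)..1,
        (legendre L).eval t * (legendre ℓ).eval t * (legendre ℓ').eval t)
        = ∫ t in (-1:ℝ)..1, (legendre ℓ').eval t * (legendre L * legendre ℓ).eval t := by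
      congr 1; funext t; simp only [Polynomial.eval_mul]; ring
    rw [hre, h0, mul_zero]

lemma gamma_expansion (ℓ ℓ' : ℕ) :
    legendre ℓ * legendre ℓ' = ∑ L ∈ Finset.range (ℓ + ℓ' + 1), Γ L ℓ ℓ' • legendre L := by
  set N := ℓ + ℓ' with hN
  have hdeg : (legendre ℓ * legendre ℓ').natDegree ≤ N :=
    le_trans Polynomial.natDegree_mul_le
      (add_le_add (natDegree_legendre_le ℓ) (natDegree_legendre_le ℓ'))
  have hmem := mem_span_legendre N _ hdeg
  have himg : legendre '' Set.Iic N = Set.range (fun i : Fin (N+1) => legendre (i : ℕ)) := by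
    ext x
    constructor
    · rintro ⟨L, hL, rfl⟩
      exact ⟨⟨L, Nat.lt_succ_of_le hL⟩, rfl⟩
    · rintro ⟨i, rfl⟩
      exact ⟨(i : ℕ), Nat.lt_succ_iff.mp i.isLt, rfl⟩
  rw [himg] at hmem
  obtain ⟨c, hc⟩ := Submodule.mem_span_range_iff_exists_fun ℝ |>.mp hmem
  have key : ∀ i : Fin (N+1), Γ (i : ℕ) ℓ ℓ' = c i := by
    intro i
    have hint : ∀ t : ℝ,
        (legendre (i:ℕ)).eval t * (legendre ℓ).eval t * (legendre ℓ').eval t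
        = ∑ j : Fin (N+1), c j * ((legendre (i:ℕ)).eval t * (legendre (j:ℕ)).eval t) := by
      intro t
      have h2 : (legendre ℓ).eval t * (legendre ℓ').eval t
          = ∑ j : Fin (N+1), c j * (legendre (j:ℕ)).eval t := by
        conv_lhs => rw [← Polynomial.eval_mul, ← hc]
        simp [Polynomial.eval_finset_sum]
      rw [mul_assoc, h2, Finset.mul_sum]
      exact Finset.sum_congr rfl (fun j _ => by ring)
    have hΓ : Γ (i:ℕ) ℓ ℓ' = (2*((i:ℕ):ℝ)+1)/2 *
        ∑ j : Fin (N+1), c j * ∫ t in (-1:ℝ)..1,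
          (legendre (i:ℕ)).eval t * (legendre (j:ℕ)).eval t := by
      unfold Γ
      congr 1
      rw [show (fun t => (legendre (i:ℕ)).eval t * (legendre ℓ).eval t * (legendre ℓ').eval t)
          = fun t => ∑ j : Fin (N+1), c j *
            ((legendre (i:ℕ)).eval t * (legendre (j:ℕ)).eval t) from funext hint]
      rw [intervalIntegral.integral_finset_sum]
      · exact Finset.sum_congr rfl (fun j _ => intervalIntegral.integral_const_mul _ _)
      · intro j _
        exact (continuous_const.mul
          ((legendre (i:ℕ)).continuous.mul (legendre (j:ℕ)).continuous)).intervalIntegrable _ _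
    rw [hΓ, Finset.sum_eq_single i]
    · rw [norm_legendre]
      have hne : (2*((i:ℕ):ℝ)+1) ≠ 0 := by positivity
      field_simp
    · intro j _ hj
      have hjj : (i : ℕ) ≠ (j : ℕ) := fun hh => hj (Fin.ext hh.symm)
      rw [orth_distinct hjj, mul_zero]
    · intro hi
      exact absurd (Finset.mem_univ i) hi
  rw [← hc, ← Fin.sum_univ_eq_sum_range (fun L => Γ L ℓ ℓ' • legendre L) (N+1)]
  exact Finset.sum_congr rfl (fun i _ => by rw [key i])

theorem legendre_product_span_and_gamma_sum (ℓ ℓ' : ℕ) :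
    legendre ℓ * legendre ℓ' ∈
        Submodule.span ℝ (legendre '' {L : ℕ | Nat.dist ℓ ℓ' ≤ L ∧ L ≤ ℓ + ℓ'}) ∧
      ∑ L ∈ Finset.range (ℓ + ℓ' + 1), Γ L ℓ ℓ' = 1 := by
  have hexp := gamma_expansion ℓ ℓ'
  constructor
  · rw [hexp]
    apply Submodule.sum_mem
    intro L hL
    by_cases h0 : Γ L ℓ ℓ' = 0
    · rw [h0, zero_smul]; exact Submodule.zero_mem _
    · refine Submodule.smul_mem _ _ (Submodule.subset_span ⟨L, ⟨?_, ?_⟩, rfl⟩)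
      · by_contra hcon
        exact h0 (Γ_vanish (not_le.mp hcon))
      · exact Nat.lt_succ_iff.mp (Finset.mem_range.mp hL)
  · have h1 := congrArg (fun p : ℝ[X] => p.eval 1) hexp
    simp only [Polynomial.eval_mul, legendre_eval_one, Polynomial.eval_finset_sum,
      Polynomial.eval_smul, smul_eq_mul, mul_one, one_mul] at h1
    exact h1.symm
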